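/- Dual inner product formula: under the above setup, for every integer vector x ∈ Z₄ (i.e. every x ∈ ℤ^c with ∂₊ᵀ · x = 0), one has λ* ∘ x = c(x) · k*, where ∘ is the standard dot product on ℤ^c. -/

import Mathlib

open Matrix

/-- determinant of the square submatrix of `M` formed by the columns indexed by `I`
(in increasing order); junk value `0` if `I` does not have exactly `n` elements. -/
noncomputable def colsDet {n c : ℕ} (M : Matrix (Fin n) (Fin c) ℤ) (I : Finset (Fin c)) : ℤ :=
  if h : I.card = n then
    (M.submatrix id fun t => ((I.orderIsoOfFin h t : Fin c))).det
  else 0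

/-- the (co)cycle `C_I` attached to an `(n+1)`-element subset `I = {i₀ < … < i_n}` of
column indices of `D`: its `i_j`-th entry is `(−1)^j · det(D restricted to the columns
I ∖ {i_j})` and its entries outside `I` vanish (junk value `0` if `I.card ≠ n+1`). -/
noncomputable def cyc {n c : ℕ} (D : Matrix (Fin n) (Fin c) ℤ) (I : Finset (Fin c)) :
    Fin c → ℤ := fun e =>
  if h : I.card = n + 1 ∧ e ∈ I then
    (-1) ^ ((((I.orderIsoOfFin h.1).symm ⟨e, h.2⟩ : Fin (n + 1)) : ℕ)) *
      colsDet D (I.erase e)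
  else 0

/-- determinant of the square matrix whose first column is the coordinate vector of `z`
in the basis `Z'` of `ker B` and whose remaining columns are the coordinate vectors of
the kernel elements `cols`.  With `B = ∂₊ᵀ` and `cols` the columns of `∂ᵀ` indexed by
`K`, this is the cutting number `c(z)`. -/
noncomputable def detCoord {b c r : ℕ} {B : Matrix (Fin b) (Fin c) ℤ}
    (Z' : Module.Basis (Fin (r + 1)) ℤ (LinearMap.ker B.mulVecLin))
    (cols : Fin r → LinearMap.ker B.mulVecLin)
    (z : LinearMap.ker B.mulVecLin) : ℤ :=
  (Matrix.of fun i j =>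
    Fin.cons (α := fun _ => ℤ) (Z'.repr z i) (fun t => Z'.repr (cols t) i) j).det

lemma colsDet_eq {m c : ℕ} (M : Matrix (Fin m) (Fin c) ℤ) {I : Finset (Fin c)} (h : I.card = m) :
    colsDet M I = (M.submatrix id fun t => (I.orderEmbOfFin h t)).det := by
  rw [colsDet, dif_pos h]; congr

theorem det_mul_transpose_eq_sum_funcs {m n : ℕ} (A B : Matrix (Fin m) (Fin n) ℤ) :
    (A * Bᵀ).det = ∑ r : Fin m → Fin n, (∏ i, A i (r i)) * (Bᵀ.submatrix r id).det := by
  have h2 : ((A * Bᵀ) : Matrix (Fin m) (Fin m) ℤ)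
      = Matrix.of (fun i => ∑ j, A i j • Bᵀ j) := by
    ext i k
    simp [Matrix.mul_apply, Finset.sum_apply]
  rw [h2]
  show Matrix.detRowAlternating _ = _
  rw [show (Matrix.detRowAlternating ((Matrix.of (fun i => ∑ j, A i j • Bᵀ j))
        : Matrix (Fin m) (Fin m) ℤ))
      = Matrix.detRowAlternating.toMultilinearMap (fun i => ∑ j : Fin n, A i j • Bᵀ j) from rfl,
    MultilinearMap.map_sum]
  refine Finset.sum_congr rfl fun r _ => ?_
  have := MultilinearMap.map_smul_univ (Matrix.detRowAlternating
      (R := ℤ) (n := Fin m)).toMultilinearMap (fun i => A i (r i)) (fun i => Bᵀ (r i))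
  simp only [AlternatingMap.coe_multilinearMap] at this ⊢
  rw [this, smul_eq_mul]
  rfl

theorem cauchy_binet {m n : ℕ} (A B : Matrix (Fin m) (Fin n) ℤ) :
    (A * Bᵀ).det = ∑ I ∈ Finset.powersetCard m (Finset.univ : Finset (Fin n)),
      colsDet A I * colsDet B I := by
  classical
  rw [det_mul_transpose_eq_sum_funcs]
  -- restrict to injective functions
  rw [show (∑ r : Fin m → Fin n, (∏ i, A i (r i)) * (Bᵀ.submatrix r id).det)
      = ∑ r ∈ Finset.univ.filter (fun r : Fin m → Fin n => Function.Injective r),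
        (∏ i, A i (r i)) * (Bᵀ.submatrix r id).det by
    refine (Finset.sum_subset (Finset.filter_subset _ _) fun r _ hr => ?_).symm
    have hni : ¬ Function.Injective r := by simpa using hr
    simp only [Function.Injective, not_forall] at hni
    obtain ⟨i, j, hij, hne⟩ := hni
    have hrow : (Bᵀ.submatrix r id) i = (Bᵀ.submatrix r id) j := by
      funext k; simp [hij]
    rw [Matrix.det_zero_of_row_eq hne hrow, mul_zero]]
  -- reindex by (I, σ)
  rw [show (∑ r ∈ Finset.univ.filter (fun r : Fin m → Fin n => Function.Injective r),
        (∏ i, A i (r i)) * (Bᵀ.submatrix r id).det)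
      = ∑ p ∈ (Finset.powersetCard m (Finset.univ : Finset (Fin n))).sigma
            (fun _ => (Finset.univ : Finset (Equiv.Perm (Fin m)))),
          (if h : p.1.card = m then
            (∏ i, A i (p.1.orderEmbOfFin h (p.2 i))) *
              (Bᵀ.submatrix (fun i => p.1.orderEmbOfFin h (p.2 i)) id).det
          else 0) by
    refine (Finset.sum_bij (fun p hp => fun i => p.1.orderEmbOfFin
        (Finset.mem_powersetCard.mp (Finset.mem_sigma.mp hp).1).2 (p.2 i)) ?_ ?_ ?_ ?_).symm
    · intro p hp
      refine Finset.mem_filter.mpr ⟨Finset.mem_univ _, ?_⟩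
      exact (Finset.orderEmbOfFin _ _).injective.comp p.2.injective
    · rintro ⟨I, σ⟩ hp ⟨J, τ⟩ hq hpq
      have hcp := (Finset.mem_powersetCard.mp (Finset.mem_sigma.mp hp).1).2
      have hcq := (Finset.mem_powersetCard.mp (Finset.mem_sigma.mp hq).1).2
      have him : ∀ (I : Finset (Fin n)) (hc : I.card = m) (σ : Equiv.Perm (Fin m)),
          Finset.image (fun i => I.orderEmbOfFin hc (σ i)) Finset.univ = I := by
        intro I hc σ
        apply Finset.eq_of_subset_of_card_le
        · intro x hx
          simp only [Finset.mem_image] at hx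
          obtain ⟨i, _, rfl⟩ := hx
          exact Finset.orderEmbOfFin_mem _ _ _
        · rw [Finset.card_image_of_injective Finset.univ
            (show Function.Injective (fun i => I.orderEmbOfFin hc (σ i)) from
              (Finset.orderEmbOfFin _ _).injective.comp σ.injective),
            Finset.card_univ, Fintype.card_fin, hc]
    
      have hIJ : I = J := by
        rw [← him I hcp σ, ← him J hcq τ]
        simp only at hpq
        rw [hpq]
      subst hIJ
      have hστ : σ = τ := by
        apply Equiv.ext; intro i
        apply (I.orderEmbOfFin hcp).injective
        have := congrFun hpq i
        simpa using this
      rw [hστ]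
    · intro r hr
      have hinj : Function.Injective r := by
        simpa using (Finset.mem_filter.mp hr).2
      have hcard : (Finset.image r Finset.univ).card = m := by
        rw [Finset.card_image_of_injective _ hinj, Finset.card_univ, Fintype.card_fin]
      have hmem : ∀ i, r i ∈ Finset.image r Finset.univ := by
        intro i; exact Finset.mem_image_of_mem r (Finset.mem_univ i)
      have hbij : Function.Bijective (fun i =>
          ((Finset.image r Finset.univ).orderIsoOfFin hcard).symm ⟨r i, hmem i⟩) := by
        rw [Fintype.bijective_iff_injective_and_card]
        refine ⟨fun i j hij => ?_, rfl⟩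
        have := congrArg (fun x => (((Finset.image r Finset.univ).orderIsoOfFin hcard) x)) hij
        simp only [OrderIso.apply_symm_apply, Subtype.mk.injEq] at this
        exact hinj this
      refine ⟨⟨Finset.image r Finset.univ, Equiv.ofBijective _ hbij⟩,
        Finset.mem_sigma.mpr ⟨Finset.mem_powersetCard.mpr ⟨Finset.subset_univ _, hcard⟩,
          Finset.mem_univ _⟩, ?_⟩
      funext i
      show (Finset.image r Finset.univ).orderEmbOfFin _
        (((Finset.image r Finset.univ).orderIsoOfFin hcard).symm ⟨r i, hmem i⟩) = r i
      rw [← Finset.coe_orderIsoOfFin_apply]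
      simp
    · intro p hp
      rw [dif_pos (Finset.mem_powersetCard.mp (Finset.mem_sigma.mp hp).1).2]]
  -- evaluate the inner sum
  rw [Finset.sum_sigma]
  refine Finset.sum_congr rfl fun I hI => ?_
  have h : I.card = m := (Finset.mem_powersetCard.mp hI).2
  calc (∑ σ : Equiv.Perm (Fin m),
        if hc : I.card = m then
          (∏ i, A i (I.orderEmbOfFin hc (σ i))) *
            (Bᵀ.submatrix (fun i => I.orderEmbOfFin hc (σ i)) id).det
        else 0)
      = ∑ σ : Equiv.Perm (Fin m),
          ((Equiv.Perm.sign σ : ℤ) * ∏ i, A i (I.orderEmbOfFin h (σ i))) *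
            (Bᵀ.submatrix (I.orderEmbOfFin h) id).det := by
        refine Finset.sum_congr rfl fun σ _ => ?_
        rw [dif_pos h]
        have hsub : (Bᵀ.submatrix (fun i => I.orderEmbOfFin h (σ i)) id)
            = (Bᵀ.submatrix (I.orderEmbOfFin h) id).submatrix σ id := by
          ext i j; simp
        rw [hsub, Matrix.det_permute]
        push_cast
        ring
    _ = (∑ σ : Equiv.Perm (Fin m), (Equiv.Perm.sign σ : ℤ) *
            ∏ i, A i (I.orderEmbOfFin h (σ i))) *
          (Bᵀ.submatrix (I.orderEmbOfFin h) id).det := by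
        rw [Finset.sum_mul]
    _ = colsDet A I * colsDet B I := by
        congr 1
        · rw [colsDet_eq A h, ← Matrix.det_transpose, Matrix.det_apply']
          refine Finset.sum_congr rfl fun σ _ => ?_
          norm_num
        · rw [colsDet_eq B h, ← Matrix.det_transpose, Matrix.transpose_submatrix,
            Matrix.transpose_transpose]

lemma cyc_dotProduct {n c : ℕ} (D : Matrix (Fin n) (Fin c) ℤ) {I : Finset (Fin c)}
    (h : I.card = n + 1) (u : Fin c → ℤ) :
    cyc D I ⬝ᵥ u = colsDet (Matrix.of (Fin.cons u D) : Matrix (Fin (n + 1)) (Fin c) ℤ) I := by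
  classical
  rw [colsDet_eq _ h, Matrix.det_succ_row_zero]
  -- LHS : sum over Fin c, supported on I
  have hsupp : ∀ e ∈ Finset.univ, e ∉ I → cyc D I e * u e = 0 := by
    intro e _ he
    rw [cyc, dif_neg (fun hh => he hh.2), zero_mul]
  rw [show cyc D I ⬝ᵥ u = ∑ e : Fin c, cyc D I e * u e from rfl,
    ← Finset.sum_subset (Finset.subset_univ I) hsupp]
  rw [← Finset.sum_coe_sort I (fun e => cyc D I e * u e)]
  rw [← Equiv.sum_comp (I.orderIsoOfFin h).toEquiv
      (fun e : I => cyc D I e * u e)]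
  refine Finset.sum_congr rfl fun j _ => ?_
  simp only [RelIso.coe_fn_toEquiv]
  have hmem : (I.orderIsoOfFin h j : Fin c) ∈ I := (I.orderIsoOfFin h j).2
  have hval : cyc D I (I.orderIsoOfFin h j : Fin c)
      = (-1) ^ (j : ℕ) * colsDet D (I.erase (I.orderIsoOfFin h j : Fin c)) := by
    rw [cyc, dif_pos ⟨h, hmem⟩]
    congr 2
    have : (⟨(I.orderIsoOfFin h j : Fin c), hmem⟩ : I) = I.orderIsoOfFin h j :=
      Subtype.ext rfl
    rw [this, OrderIso.symm_apply_apply]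
  -- RHS pieces
  have hcardE : (I.erase (I.orderIsoOfFin h j : Fin c)).card = n := by
    rw [Finset.card_erase_of_mem hmem, h]; omega
  have hminor : ((Matrix.of (Fin.cons u D) : Matrix (Fin (n + 1)) (Fin c) ℤ).submatrix id
        (fun t => I.orderEmbOfFin h t)).submatrix Fin.succ j.succAbove
      = D.submatrix id (fun t => (I.erase (I.orderIsoOfFin h j : Fin c)).orderEmbOfFin hcardE t) := by
    have hf1 : ∀ t, I.orderEmbOfFin h (j.succAbove t)
        ∈ I.erase (I.orderIsoOfFin h j : Fin c) := by
      intro t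
      refine Finset.mem_erase.mpr ⟨?_, Finset.orderEmbOfFin_mem _ _ _⟩
      rw [Finset.coe_orderIsoOfFin_apply]
      exact fun hcon => (Fin.succAbove_ne j t) ((I.orderEmbOfFin h).injective hcon)
    have hf2 : StrictMono (fun t => I.orderEmbOfFin h (j.succAbove t)) :=
      (I.orderEmbOfFin h).strictMono.comp (Fin.strictMono_succAbove j)
    have hemb : (fun t => I.orderEmbOfFin h (j.succAbove t))
        = fun t => (I.erase (I.orderIsoOfFin h j : Fin c)).orderEmbOfFin hcardE t :=
      Finset.orderEmbOfFin_unique hcardE hf1 hf2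
    ext i t
    simp only [Matrix.submatrix_apply, Matrix.of_apply, Fin.cons_succ, id_eq]
    rw [congrFun hemb t]
    exact rfl
  rw [hval, hminor, ← colsDet_eq D hcardE]
  simp only [Matrix.submatrix_apply, Matrix.of_apply, Fin.cons_zero, id_eq,
    Finset.coe_orderIsoOfFin_apply]
  ring
  exact rfl

lemma fsum_dotProduct {α : Type*} {c : ℕ} (s : Finset α) (f : α → Fin c → ℤ) (v : Fin c → ℤ) :
    (∑ i ∈ s, f i) ⬝ᵥ v = ∑ i ∈ s, f i ⬝ᵥ v := by
  simp only [dotProduct, Finset.sum_apply, Finset.sum_mul]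
  exact Finset.sum_comm

lemma block_det {n c : ℕ} (D : Matrix (Fin n) (Fin c) ℤ) (x u : Fin c → ℤ)
    (hx : D *ᵥ x = 0) :
    ((Matrix.of (Fin.cons x D) : Matrix (Fin (n+1)) (Fin c) ℤ)
        * (Matrix.of (Fin.cons u D) : Matrix (Fin (n+1)) (Fin c) ℤ)ᵀ).det
      = (x ⬝ᵥ u) * (D * Dᵀ).det := by
  rw [Matrix.det_succ_row_zero]
  rw [Finset.sum_eq_single 0]
  · simp only [Fin.val_zero, pow_zero, one_mul]
    have h00 : ((Matrix.of (Fin.cons x D) : Matrix (Fin (n+1)) (Fin c) ℤ)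
        * (Matrix.of (Fin.cons u D) : Matrix (Fin (n+1)) (Fin c) ℤ)ᵀ) 0 0 = x ⬝ᵥ u := by
      simp [Matrix.mul_apply, dotProduct]
      exact rfl
    have hsub : (((Matrix.of (Fin.cons x D) : Matrix (Fin (n+1)) (Fin c) ℤ)
          * (Matrix.of (Fin.cons u D) : Matrix (Fin (n+1)) (Fin c) ℤ)ᵀ).submatrix
            Fin.succ (Fin.succAbove 0)) = D * Dᵀ := by
      ext i j
      simp [Matrix.mul_apply, Fin.succAbove_zero]
      exact rfl
    rw [h00, hsub]
  · intro j _ hj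
    obtain ⟨l, rfl⟩ := Fin.exists_succ_eq.mpr hj
    have h0 : ((Matrix.of (Fin.cons x D) : Matrix (Fin (n+1)) (Fin c) ℤ)
        * (Matrix.of (Fin.cons u D) : Matrix (Fin (n+1)) (Fin c) ℤ)ᵀ) 0 l.succ = 0 := by
      have := congrFun hx l
      simp only [Matrix.mulVec, dotProduct, Pi.zero_apply] at this
      simp only [Matrix.mul_apply, Matrix.transpose_apply, Matrix.of_apply,
        Fin.cons_zero, Fin.cons_succ]
      rw [← this]
      exact Finset.sum_congr rfl fun k _ => mul_comm _ _
    rw [h0, mul_zero, zero_mul]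
  · intro h; exact absurd (Finset.mem_univ _) h

lemma cyc_mem_ker {n c : ℕ} (D : Matrix (Fin n) (Fin c) ℤ) (I : Finset (Fin c)) :
    D *ᵥ cyc D I = 0 := by
  by_cases hC : I.card = n + 1
  · funext l
    have h1 : (D *ᵥ cyc D I) l = cyc D I ⬝ᵥ (fun j => D l j) := by
      simp only [Matrix.mulVec, dotProduct]
      exact Finset.sum_congr rfl fun k _ => mul_comm _ _
    rw [h1, cyc_dotProduct D hC, colsDet_eq _ hC]
    have hrow : ((Matrix.of (Fin.cons (fun j => D l j) D) : Matrix (Fin (n+1)) (Fin c) ℤ).submatrix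
          id fun t => I.orderEmbOfFin hC t) 0
        = ((Matrix.of (Fin.cons (fun j => D l j) D) : Matrix (Fin (n+1)) (Fin c) ℤ).submatrix
          id fun t => I.orderEmbOfFin hC t) l.succ := by
      funext t; simp
      exact rfl
    rw [Matrix.det_zero_of_row_eq (Fin.succ_ne_zero l).symm hrow]
    rfl
  · have : cyc D I = 0 := funext fun e => dif_neg (fun hh => hC hh.1)
    rw [this, Matrix.mulVec_zero]

lemma orth {n c : ℕ} (D : Matrix (Fin n) (Fin c) ℤ) (x u : Fin c → ℤ)
    (hx : D *ᵥ x = 0) (hu : D *ᵥ u = 0) :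
    (∑ I ∈ Finset.powersetCard (n + 1) (Finset.univ : Finset (Fin c)),
        (cyc D I ⬝ᵥ x) • cyc D I) ⬝ᵥ u
      = (x ⬝ᵥ u) * (D * Dᵀ).det := by
  rw [fsum_dotProduct, ← block_det D x u hx, cauchy_binet]
  refine Finset.sum_congr rfl fun I hI => ?_
  have h : I.card = n + 1 := (Finset.mem_powersetCard.mp hI).2
  rw [smul_dotProduct, smul_eq_mul, cyc_dotProduct D h x, cyc_dotProduct D h u]

lemma key {n c : ℕ} (D : Matrix (Fin n) (Fin c) ℤ) (x : Fin c → ℤ)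
    (hx : D *ᵥ x = 0) :
    ∑ I ∈ Finset.powersetCard (n + 1) (Finset.univ : Finset (Fin c)),
        (cyc D I ⬝ᵥ x) • cyc D I = (D * Dᵀ).det • x := by
  set S := ∑ I ∈ Finset.powersetCard (n + 1) (Finset.univ : Finset (Fin c)),
      (cyc D I ⬝ᵥ x) • cyc D I with hS
  set z := S - (D * Dᵀ).det • x with hzdef
  have hDz : D *ᵥ z = 0 := by
    rw [hzdef, Matrix.mulVec_sub, Matrix.mulVec_smul, hx, smul_zero, sub_zero, hS]
    have : S = ∑ I ∈ Finset.powersetCard (n + 1) (Finset.univ : Finset (Fin c)),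
        (cyc D I ⬝ᵥ x) • cyc D I := hS
    rw [show D *ᵥ S = D.mulVecLin S from rfl, hS, map_sum]
    refine Finset.sum_eq_zero fun I _ => ?_
    rw [_root_.map_smul, Matrix.mulVecLin_apply, cyc_mem_ker, smul_zero]
  have hzz : z ⬝ᵥ z = 0 := by
    rw [hzdef]
    rw [sub_dotProduct, smul_dotProduct, ← hzdef]
    rw [show S ⬝ᵥ z = (x ⬝ᵥ z) * (D * Dᵀ).det from orth D x z hx hDz]
    rw [smul_eq_mul]
    ring
  have hz0 : z = 0 := dotProduct_self_eq_zero.mp hzz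
  have := sub_eq_zero.mp hz0
  exact this

section phi
variable {b c r : ℕ} {B : Matrix (Fin b) (Fin c) ℤ}
  (Z' : Module.Basis (Fin (r + 1)) ℤ (LinearMap.ker B.mulVecLin))
  (cols : Fin r → LinearMap.ker B.mulVecLin)

private lemma cons_updateRow (v : Fin (r + 1) → ℤ) :
    (Matrix.of (Fin.cons v (fun t => ⇑(Z'.repr (cols t)))) : Matrix (Fin (r+1)) (Fin (r+1)) ℤ)
      = Matrix.updateRow (Matrix.of (Fin.cons 0 (fun t => ⇑(Z'.repr (cols t)))))
          0 v := by
  rw [Matrix.updateRow]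
  exact congrArg Matrix.of (Fin.update_cons_zero _ _ _).symm

noncomputable def phiAux : LinearMap.ker B.mulVecLin →ₗ[ℤ] ℤ where
  toFun z := (Matrix.of (Fin.cons (⇑(Z'.repr z))
      (fun t => ⇑(Z'.repr (cols t)))) : Matrix (Fin (r+1)) (Fin (r+1)) ℤ).det
  map_add' z w := by
    have h := Matrix.det_updateRow_add
      (Matrix.of (Fin.cons 0 (fun t => ⇑(Z'.repr (cols t)))) : Matrix (Fin (r+1)) (Fin (r+1)) ℤ)
      0 (⇑(Z'.repr z)) (⇑(Z'.repr w))
    rw [← cons_updateRow Z' cols, ← cons_updateRow Z' cols, ← cons_updateRow Z' cols] at h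
    simpa only [map_add, Finsupp.coe_add] using h
  map_smul' a z := by
    have h := Matrix.det_updateRow_smul
      (Matrix.of (Fin.cons 0 (fun t => ⇑(Z'.repr (cols t)))) : Matrix (Fin (r+1)) (Fin (r+1)) ℤ)
      0 a (⇑(Z'.repr z))
    rw [← cons_updateRow Z' cols, ← cons_updateRow Z' cols] at h
    have hco : ⇑(Z'.repr (a • z)) = a • ⇑(Z'.repr z) := by
      rw [LinearMapClass.map_smul, Finsupp.coe_smul]
    show (Matrix.of (Fin.cons (⇑(Z'.repr (a • z))) (fun t => ⇑(Z'.repr (cols t))))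
        : Matrix (Fin (r+1)) (Fin (r+1)) ℤ).det
      = a • (Matrix.of (Fin.cons (⇑(Z'.repr z)) (fun t => ⇑(Z'.repr (cols t))))
        : Matrix (Fin (r+1)) (Fin (r+1)) ℤ).det
    rw [hco, smul_eq_mul]
    exact h

lemma detCoord_eq_phi (z : LinearMap.ker B.mulVecLin) :
    detCoord Z' cols z = phiAux Z' cols z := by
  rw [detCoord, ← Matrix.det_transpose]
  show Matrix.det _ = Matrix.det _
  congr 1
  ext j i
  refine Fin.cases ?_ (fun t => ?_) j <;> simp

end phi

/-- Dual inner product formula: `λ* ∘ x = c(x) · k*` for every integer cocycle `x ∈ Z₄`,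
where `λ* = Σ_I c(C*_I) • C*_I` is the standard harmonic cocycle and
`k* = det([∂₊ᵀ]_{Z*} [∂₊ᵀ]_{Z*}ᵀ)` is the dual tree number. -/
theorem dual_inner_product_formula
    -- chain complex of free abelian groups around degree i
    (a b c d e : ℕ) (ha : 0 < a) (hb : 0 < b) (hc : 0 < c) (hd : 0 < d) (he : 0 < e)
    (Bm : Matrix (Fin a) (Fin b) ℤ) (B : Matrix (Fin b) (Fin c) ℤ)
    (Bp : Matrix (Fin c) (Fin d) ℤ) (Bpp : Matrix (Fin d) (Fin e) ℤ)
    (h1 : Bm * B = 0) (h2 : B * Bp = 0) (h3 : Bp * Bpp = 0)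
    -- `Z` is a ℤ-basis of `Z₁ = ker ∂₋`, of rank n, and `D = [∂]_Z` is the matrix of
    -- coordinates of the columns of `∂` in the basis `Z`
    (n : ℕ) (Z : Module.Basis (Fin n) ℤ (LinearMap.ker Bm.mulVecLin))
    (D : Matrix (Fin n) (Fin c) ℤ)
    (hD : ∀ j i, B i j = ∑ l, D l j * (Z l : Fin b → ℤ) i)
    -- `Z*` is a ℤ-basis of `Z₃ = ker ∂₊₊ᵀ`, of rank n*, and `Dst = [∂₊ᵀ]_{Z*}` is the
    -- matrix of coordinates of the columns of `∂₊ᵀ` in the basis `Z*`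
    (nst : ℕ) (Zst : Module.Basis (Fin nst) ℤ (LinearMap.ker Bppᵀ.mulVecLin))
    (Dst : Matrix (Fin nst) (Fin c) ℤ)
    (hDst : ∀ j i, Bpᵀ i j = ∑ l, Dst l j * (Zst l : Fin d → ℤ) i)
    -- unicycle condition: `rk H̃_{i−1}(X) = 0`, `rk H̃_i(X) = 1`, `rk H̃_{i+1}(X) = 0`
    (hrkB : (B.map (Int.cast : ℤ → ℚ)).rank = n)
    (hker : Module.finrank ℚ (LinearMap.ker (B.map (Int.cast : ℤ → ℚ)).mulVecLin)
      = (Bp.map (Int.cast : ℤ → ℚ)).rank + 1)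
    (hrkBp : (Bp.map (Int.cast : ℤ → ℚ)).rank = nst)
    -- `Z''` is a ℤ-basis of `Z₄ = ker ∂₊ᵀ`, of rank s + 1
    (s : ℕ) (Z'' : Module.Basis (Fin (s + 1)) ℤ (LinearMap.ker Bpᵀ.mulVecLin))
    -- `K` picks s columns of `∂ᵀ` whose ℚ-span is the full column space of `∂ᵀ`;
    -- `Kcol` are these columns as elements of `Z₄`
    (K : Fin s → Fin b) (hKinj : Function.Injective K)
    (Kcol : Fin s → LinearMap.ker Bpᵀ.mulVecLin)
    (hKcol : ∀ t, (Kcol t : Fin c → ℤ) = fun i => Bᵀ i (K t))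
    (hKspan : Submodule.span ℚ (Set.range fun t => fun i => (Bᵀ i (K t) : ℚ))
      = Submodule.span ℚ (Set.range fun j => fun i => (Bᵀ i j : ℚ)))
    -- the cocycles `C*_I` as elements of `Z₄`
    (CsI : Finset (Fin c) → LinearMap.ker Bpᵀ.mulVecLin)
    (hCsI : ∀ I, (CsI I : Fin c → ℤ) = cyc Dst I)
    -- an integer cocycle `x ∈ Z₄`
    (x : Fin c → ℤ) (hx : x ∈ LinearMap.ker Bpᵀ.mulVecLin) :
    (∑ I ∈ Finset.powersetCard (nst + 1) (Finset.univ : Finset (Fin c)),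
        detCoord Z'' Kcol (CsI I) • cyc Dst I) ⬝ᵥ x
      = detCoord Z'' Kcol ⟨x, hx⟩ * (Dst * Dstᵀ).det := by
    classical
  -- `x` is in the kernel of `Dst`
  have hDx : Dst *ᵥ x = 0 := by
    have hx0 : Bpᵀ *ᵥ x = 0 := by
      have := LinearMap.mem_ker.mp hx
      rwa [Matrix.mulVecLin_apply] at this
    have hco : ((∑ l, (Dst *ᵥ x) l • Zst l : LinearMap.ker Bppᵀ.mulVecLin) : Fin d → ℤ)
        = 0 := by
      rw [AddSubmonoidClass.coe_finset_sum]
      funext i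
      have h0 : (0 : ℤ) = (Bpᵀ *ᵥ x) i := by rw [hx0]; rfl
      rw [Matrix.mulVec, dotProduct] at h0
      simp only [Finset.sum_apply, Pi.smul_apply, SetLike.val_smul, smul_eq_mul,
        Matrix.mulVec, dotProduct, Pi.zero_apply]
      rw [h0]
      have hR : ∀ j : Fin c, Bpᵀ i j * x j
          = ∑ l : Fin nst, Dst l j * (Zst l : Fin d → ℤ) i * x j := by
        intro j; rw [hDst j i, Finset.sum_mul]
      rw [Finset.sum_congr rfl fun j _ => hR j, Finset.sum_comm]
      refine Finset.sum_congr rfl fun l _ => ?_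
      rw [Finset.sum_mul]
      exact Finset.sum_congr rfl fun j _ => by ring
    have hzero : (∑ l, (Dst *ᵥ x) l • Zst l : LinearMap.ker Bppᵀ.mulVecLin) = 0 :=
      Subtype.ext hco
    have hli := Fintype.linearIndependent_iff.mp Zst.linearIndependent _ hzero
    funext l
    exact hli l
  -- the vector identity
  have hKEY := key Dst x hDx
  -- the element `T` of `Z₄`
  set T : LinearMap.ker Bpᵀ.mulVecLin :=
    ∑ I ∈ Finset.powersetCard (nst + 1) (Finset.univ : Finset (Fin c)),
      (cyc Dst I ⬝ᵥ x) • CsI I with hT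
  have hTx : T = ((Dst * Dstᵀ).det) • (⟨x, hx⟩ : LinearMap.ker Bpᵀ.mulVecLin) := by
    apply Subtype.ext
    rw [hT, AddSubmonoidClass.coe_finset_sum]
    have hterm : ∀ I ∈ Finset.powersetCard (nst + 1) (Finset.univ : Finset (Fin c)),
        (((cyc Dst I ⬝ᵥ x) • CsI I : LinearMap.ker Bpᵀ.mulVecLin) : Fin c → ℤ)
          = (cyc Dst I ⬝ᵥ x) • cyc Dst I := by
      intro I _
      rw [SetLike.val_smul, hCsI]
    rw [Finset.sum_congr rfl hterm, hKEY]
    rfl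
  -- rewrite the left-hand side through the linear functional `phiAux`
  have hlhs : (∑ I ∈ Finset.powersetCard (nst + 1) (Finset.univ : Finset (Fin c)),
        detCoord Z'' Kcol (CsI I) • cyc Dst I) ⬝ᵥ x
      = phiAux Z'' Kcol T := by
    rw [fsum_dotProduct, hT, map_sum]
    refine Finset.sum_congr rfl fun I _ => ?_
    rw [smul_dotProduct, _root_.map_smul, smul_eq_mul, smul_eq_mul,
      detCoord_eq_phi]
    ring
  rw [hlhs, hTx, _root_.map_smul, smul_eq_mul, detCoord_eq_phi]
  ring
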